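/- arXiv:2010.13096 — 5 statements merged into one kernel-verified Lean document; each statement's English description precedes it below -/
import Mathlib

section
/- Suppose V : ℝ^n → ℝ is continuously differentiable, V(0) = 0, f(0) = 0, and there exists γ > 0 such that for all x with 0 < ‖x‖ ≤ γ we have V(x) > 0 and ⟨∇V(x), f(x)⟩ ≤ 0. Then the origin of the ODE x' = f(x) is Lyapunov stable: for all ε > 0 there exists δ > 0 such that every right-maximal solution x(t) on [0,T) with ‖x(0)‖ < δ satisfies ‖x(t)‖ < ε for all t ∈ [0,T). -/
open Set Filter Topology Metric
open scoped ENNReal RealInnerProductSpace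

noncomputable section

/-- The interval [0, T) of existence, with right endpoint `T : ℝ≥0∞`. -/
def Ico0 (T : ℝ≥0∞) : Set ℝ := {t | 0 ≤ t ∧ ENNReal.ofReal t < T}

/-- `x` solves the autonomous ODE x' = f(x) on [0, T). -/
def IsSolOn {n : ℕ} (f : EuclideanSpace ℝ (Fin n) → EuclideanSpace ℝ (Fin n))
    (x : ℝ → EuclideanSpace ℝ (Fin n)) (T : ℝ≥0∞) : Prop :=
  ∀ t ∈ Ico0 T, HasDerivAt x (f (x t)) t

/-- `x` is a right-maximal solution of x' = f(x) on [0, T):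
it is a solution, and there is no solution on a strictly larger interval agreeing with it. -/
def IsMaxSol {n : ℕ} (f : EuclideanSpace ℝ (Fin n) → EuclideanSpace ℝ (Fin n))
    (x : ℝ → EuclideanSpace ℝ (Fin n)) (T : ℝ≥0∞) : Prop :=
  IsSolOn f x T ∧ ∀ (y : ℝ → EuclideanSpace ℝ (Fin n)) (T' : ℝ≥0∞), T < T' → IsSolOn f y T' →
    ¬ (∀ t ∈ Ico0 T, y t = x t)

/-- The filter of times approaching the right endpoint `T` of the interval of existence. -/
def endFilter (T : ℝ≥0∞) : Filter ℝ :=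
  if T = ⊤ then atTop else 𝓝[<] T.toReal

theorem stmt_1 {n : ℕ} (f : EuclideanSpace ℝ (Fin n) → EuclideanSpace ℝ (Fin n))
    (V : EuclideanSpace ℝ (Fin n) → ℝ)
    (hf : LocallyLipschitz f) (hV : ContDiff ℝ 1 V) (hV0 : V 0 = 0) (hf0 : f 0 = 0)
    (hlyap : ∃ γ > (0:ℝ), ∀ x : EuclideanSpace ℝ (Fin n), 0 < ‖x‖ → ‖x‖ ≤ γ →
      0 < V x ∧ ⟪gradient V x, f x⟫ ≤ 0) :
    ∀ ε > (0:ℝ), ∃ δ > (0:ℝ), ∀ (x : ℝ → EuclideanSpace ℝ (Fin n)) (T : ℝ≥0∞),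
      IsMaxSol f x T → ‖x 0‖ < δ → ∀ t ∈ Ico0 T, ‖x t‖ < ε := by
  obtain ⟨γ, hγ, hly⟩ := hlyap
  intro ε hε
  -- trivial case: the space is a subsingleton
  by_cases hns : Subsingleton (EuclideanSpace ℝ (Fin n))
  · refine ⟨1, one_pos, fun x T _ _ t _ => ?_⟩
    have : x t = 0 := Subsingleton.elim _ _
    simpa [this] using hε
  have : Nontrivial (EuclideanSpace ℝ (Fin n)) := not_subsingleton_iff_nontrivial.mp hns
  set ε' : ℝ := min ε γ with hε'def
  have hε' : 0 < ε' := lt_min hε hγ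
  have hε'γ : ε' ≤ γ := min_le_right _ _
  -- minimum of V on the sphere of radius ε'
  have hsne : (sphere (0 : EuclideanSpace ℝ (Fin n)) ε').Nonempty :=
    NormedSpace.sphere_nonempty.mpr hε'.le
  obtain ⟨z, hz, hzmin⟩ := (isCompact_sphere (0 : EuclideanSpace ℝ (Fin n)) ε').exists_isMinOn hsne
    (hV.continuous.continuousOn)
  have hznorm : ‖z‖ = ε' := by simpa [mem_sphere_iff_norm] using hz
  set m : ℝ := V z with hm
  have hmpos : 0 < m := (hly z (by rw [hznorm]; exact hε') (by rw [hznorm]; exact hε'γ)).1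
  -- choose δ using continuity of V at 0
  have hopen : {y : EuclideanSpace ℝ (Fin n) | V y < m} ∈ 𝓝 (0 : EuclideanSpace ℝ (Fin n)) := by
    have hc := hV.continuous.continuousAt (x := (0 : EuclideanSpace ℝ (Fin n)))
    exact hc (Iio_mem_nhds (by simpa [hV0] using hmpos))
  obtain ⟨δ₀, hδ₀, hball⟩ := Metric.mem_nhds_iff.mp hopen
  refine ⟨min δ₀ ε', lt_min hδ₀ hε', fun x T hsol hx0 t ht => ?_⟩
  have hxsol := hsol.1
  have hx0' : ‖x 0‖ < ε' := lt_of_lt_of_le hx0 (min_le_right _ _)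
  have hVx0 : V (x 0) < m := hball (by
    simpa [mem_ball, dist_zero_right] using lt_of_lt_of_le hx0 (min_le_left _ _))
  -- it suffices to show ‖x t‖ < ε'
  suffices h : ‖x t‖ < ε' from lt_of_lt_of_le h (min_le_left _ _)
  by_contra hcon
  push_neg at hcon
  -- x is continuous on [0, t]
  have hsub : Icc (0:ℝ) t ⊆ Ico0 T := fun u hu =>
    ⟨hu.1, lt_of_le_of_lt (ENNReal.ofReal_le_ofReal hu.2) ht.2⟩
  have hcont : ContinuousOn (fun u => ‖x u‖) (Icc 0 t) := fun u hu =>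
    ((hxsol u (hsub hu)).continuousAt.norm).continuousWithinAt
  have ht0 : (0:ℝ) ≤ t := ht.1
  -- first time the norm reaches ε'
  set S : Set ℝ := Icc (0:ℝ) t ∩ (fun u => ‖x u‖) ⁻¹' {ε'} with hS
  have hSne : S.Nonempty := by
    have hmem : ε' ∈ Icc ‖x 0‖ ‖x t‖ := ⟨hx0'.le, hcon⟩
    obtain ⟨u, hu, hux⟩ := intermediate_value_Icc ht0 hcont hmem
    exact ⟨u, hu, hux⟩
  have hSbdd : BddBelow S := ⟨0, fun u hu => hu.1.1⟩
  have hSclosed : IsClosed S :=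
    hcont.preimage_isClosed_of_isClosed isClosed_Icc isClosed_singleton
  set t₁ : ℝ := sInf S with ht₁def
  have ht₁S : t₁ ∈ S := hSclosed.csInf_mem hSne hSbdd
  have ht₁Icc : t₁ ∈ Icc (0:ℝ) t := ht₁S.1
  have ht₁norm : ‖x t₁‖ = ε' := ht₁S.2
  -- on [0, t₁] the norm stays ≤ ε'
  have hle : ∀ u ∈ Icc (0:ℝ) t₁, ‖x u‖ ≤ ε' := by
    intro u hu
    by_contra hgt
    push_neg at hgt
    have hut : u ∈ Icc (0:ℝ) t := ⟨hu.1, hu.2.trans ht₁Icc.2⟩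
    have hmem : ε' ∈ Icc ‖x 0‖ ‖x u‖ := ⟨hx0'.le, hgt.le⟩
    obtain ⟨v, hv, hvx⟩ := intermediate_value_Icc hu.1
      (hcont.mono (Icc_subset_Icc le_rfl hut.2)) hmem
    have hvS : v ∈ S := ⟨⟨hv.1, hv.2.trans hut.2⟩, hvx⟩
    have : t₁ ≤ v := csInf_le hSbdd hvS
    have hu_lt : u < t₁ := lt_of_le_of_ne hu.2 (by
      rintro rfl; exact absurd ht₁norm (ne_of_gt hgt))
    exact absurd (this.trans hv.2) (not_le.mpr hu_lt)
  -- V ∘ x is antitone on [0, t₁]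
  have hderiv : ∀ u ∈ Icc (0:ℝ) t₁, HasDerivAt (fun s => V (x s)) ⟪gradient V (x u), f (x u)⟫ u := by
    intro u hu
    have hxd := hxsol u (hsub ⟨hu.1, hu.2.trans ht₁Icc.2⟩)
    have hgd := (hV.differentiable one_ne_zero (x u)).hasGradientAt
    have := hgd.hasFDerivAt.comp_hasDerivAt u hxd
    have h2 : HasDerivAt (fun s => V (x s)) _ u := this
    simpa [InnerProductSpace.toDual_apply_apply] using h2
  have hnonpos : ∀ u ∈ Icc (0:ℝ) t₁, ⟪gradient V (x u), f (x u)⟫ ≤ 0 := by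
    intro u hu
    rcases eq_or_lt_of_le (norm_nonneg (x u)) with h0 | h0
    · have : x u = 0 := by simpa using h0.symm
      simp [this, hf0]
    · exact (hly (x u) h0 ((hle u hu).trans hε'γ)).2
  have hanti : AntitoneOn (fun s => V (x s)) (Icc 0 t₁) := by
    apply antitoneOn_of_deriv_nonpos (convex_Icc 0 t₁)
    · exact fun u hu => (hderiv u hu).continuousAt.continuousWithinAt
    · intro u hu
      exact ((hderiv u (interior_subset hu)).differentiableAt).differentiableWithinAt
    · intro u hu
      rw [(hderiv u (interior_subset hu)).deriv]
      exact hnonpos u (interior_subset hu)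
  have hVle : V (x t₁) ≤ V (x 0) :=
    hanti (left_mem_Icc.mpr ht₁Icc.1) (right_mem_Icc.mpr ht₁Icc.1) ht₁Icc.1
  have hmle : m ≤ V (x t₁) := hzmin (by simpa [mem_sphere_iff_norm] using ht₁norm)
  linarith
end
end

section
/- Suppose there exist positive constants k₁, k₂, k₃ and γ > 0, and a continuously differentiable V : ℝ^n → ℝ such that for all x with ‖x‖ ≤ γ: k₁²‖x‖² ≤ V(x) ≤ k₂²‖x‖² and ⟨∇V(x), f(x)⟩ ≤ -2k₃ V(x). Then the origin of x' = f(x) is exponentially stable with scaling constant α = k₂/k₁ and decay rate β = k₃: for every right-maximal solution x(t) on [0,T) with ‖x(0)‖ < (k₁/k₂)γ, we have ‖x(t)‖ ≤ (k₂/k₁)‖x(0)‖ exp(-k₃ t) for all t ∈ [0,T). -/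
open Set Filter Topology Metric
open scoped ENNReal RealInnerProductSpace

noncomputable section

theorem stmt_2 {n : ℕ} (f : EuclideanSpace ℝ (Fin n) → EuclideanSpace ℝ (Fin n))
    (V : EuclideanSpace ℝ (Fin n) → ℝ) (k₁ k₂ k₃ γ : ℝ)
    (hf : LocallyLipschitz f) (hV : ContDiff ℝ 1 V)
    (hk₁ : 0 < k₁) (hk₂ : 0 < k₂) (hk₃ : 0 < k₃) (hγ : 0 < γ)
    (hbound : ∀ x : EuclideanSpace ℝ (Fin n), ‖x‖ ≤ γ →
      k₁^2 * ‖x‖^2 ≤ V x ∧ V x ≤ k₂^2 * ‖x‖^2 ∧ ⟪gradient V x, f x⟫ ≤ -2 * k₃ * V x) :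
    ∀ (x : ℝ → EuclideanSpace ℝ (Fin n)) (T : ℝ≥0∞),
      IsMaxSol f x T → ‖x 0‖ < (k₁ / k₂) * γ →
        ∀ t ∈ Ico0 T, ‖x t‖ ≤ (k₂ / k₁) * ‖x 0‖ * Real.exp (-k₃ * t) := by
  intro x T hx hx0 t ht
  obtain ⟨hsol, -⟩ := hx
  rcases Nat.eq_zero_or_pos n with hn | hn
  · subst hn
    have hxt : x t = 0 := Subsingleton.elim _ _
    rw [hxt, norm_zero]
    positivity
  -- k₁ ≤ k₂
  have hk12 : k₁ ≤ k₂ := by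
    set y : EuclideanSpace ℝ (Fin n) := EuclideanSpace.single ⟨0, hn⟩ γ with hy
    have hyn : ‖y‖ = γ := by
      rw [hy, EuclideanSpace.norm_single, Real.norm_eq_abs, abs_of_pos hγ]
    obtain ⟨h1, h2, -⟩ := hbound y (le_of_eq hyn)
    rw [hyn] at h1 h2
    have hsq : k₁ ^ 2 ≤ k₂ ^ 2 := by nlinarith [mul_pos hγ hγ]
    exact (pow_le_pow_iff_left₀ hk₁.le hk₂.le two_ne_zero).mp hsq
  -- the key Gronwall-type estimate
  have key : ∀ t' : ℝ, 0 ≤ t' → ENNReal.ofReal t' < T →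
      (∀ s ∈ Icc (0:ℝ) t', ‖x s‖ ≤ γ) →
      ‖x t'‖ ≤ (k₂ / k₁) * ‖x 0‖ * Real.exp (-k₃ * t') := by
    intro t' ht'0 ht'T hγs
    have hmem : ∀ s ∈ Icc (0:ℝ) t', s ∈ Ico0 T := fun s hs =>
      ⟨hs.1, lt_of_le_of_lt (ENNReal.ofReal_le_ofReal hs.2) ht'T⟩
    set g : ℝ → ℝ := fun s => V (x s) * Real.exp (2 * k₃ * s) with hg
    have hderiv : ∀ s ∈ Icc (0:ℝ) t', HasDerivAt g
        ((⟪gradient V (x s), f (x s)⟫ + 2 * k₃ * V (x s)) * Real.exp (2 * k₃ * s)) s := by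
      intro s hs
      have hxs := hsol s (hmem s hs)
      have hVd : HasFDerivAt V ((InnerProductSpace.toDual ℝ _) (gradient V (x s))) (x s) :=
        ((hV.differentiable one_ne_zero) (x s)).hasGradientAt.hasFDerivAt
      have hVx : HasDerivAt (fun u => V (x u)) ⟪gradient V (x s), f (x s)⟫ s := by
        have := hVd.comp_hasDerivAt s hxs
        rw [InnerProductSpace.toDual_apply_apply] at this
        exact this
      have hexp : HasDerivAt (fun u : ℝ => Real.exp (2 * k₃ * u))
          (2 * k₃ * Real.exp (2 * k₃ * s)) s := by
        have h1 : HasDerivAt (fun u : ℝ => 2 * k₃ * u) (2 * k₃) s := by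
          simpa using (hasDerivAt_id s).const_mul (2 * k₃)
        have := h1.exp
        simpa [mul_comm] using this
      have := hVx.mul hexp
      refine this.congr_deriv ?_
      ring
    have hmono : AntitoneOn g (Icc 0 t') := by
      apply antitoneOn_of_deriv_nonpos (convex_Icc _ _)
      · exact fun s hs => (hderiv s hs).continuousAt.continuousWithinAt
      · intro s hs
        rw [interior_Icc] at hs
        exact (hderiv s (Ioo_subset_Icc_self hs)).differentiableAt.differentiableWithinAt
      · intro s hs
        rw [interior_Icc] at hs
        have hs' := Ioo_subset_Icc_self hs
        rw [(hderiv s hs').deriv]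
        have hb := (hbound (x s) (hγs s hs')).2.2
        have hE : (0:ℝ) < Real.exp (2 * k₃ * s) := Real.exp_pos _
        nlinarith
    have hgt : g t' ≤ g 0 := hmono ⟨le_rfl, ht'0⟩ ⟨ht'0, le_rfl⟩ ht'0
    have hg0 : g 0 = V (x 0) := by simp [hg]
    have h1 := (hbound (x t') (hγs t' ⟨ht'0, le_rfl⟩)).1
    have h2 := (hbound (x 0) (hγs 0 ⟨le_rfl, ht'0⟩)).2.1
    have hE : Real.exp (-k₃ * t') * Real.exp (-k₃ * t') * Real.exp (2 * k₃ * t') = 1 := by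
      rw [← Real.exp_add, ← Real.exp_add, show -k₃ * t' + -k₃ * t' + 2 * k₃ * t' = 0 by ring,
        Real.exp_zero]
    have hEpos : (0:ℝ) < Real.exp (2 * k₃ * t') := Real.exp_pos _
    have hE2pos : (0:ℝ) < Real.exp (-k₃ * t') := Real.exp_pos _
    have hsq : (k₁ * ‖x t'‖)^2 ≤ (k₂ * ‖x 0‖ * Real.exp (-k₃ * t'))^2 := by
      have hgt' : V (x t') * Real.exp (2 * k₃ * t') ≤ V (x 0) := by
        rw [← hg0]; exact hgt
      nlinarith [sq_nonneg ‖x t'‖, sq_nonneg ‖x 0‖, norm_nonneg (x t'), norm_nonneg (x 0)]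
    have hle : k₁ * ‖x t'‖ ≤ k₂ * ‖x 0‖ * Real.exp (-k₃ * t') := by
      have h' := Real.sqrt_le_sqrt hsq
      rwa [Real.sqrt_sq (by positivity), Real.sqrt_sq (by positivity)] at h'
    rw [div_mul_eq_mul_div, div_mul_eq_mul_div, le_div_iff₀ hk₁]
    nlinarith
  -- invariance: the solution stays in the ball of radius γ
  have inv : ∀ s ∈ Ico0 T, ‖x s‖ ≤ γ := by
    by_contra hc
    push_neg at hc
    obtain ⟨t₀, ht₀, hγt₀⟩ := hc
    set S := {s ∈ Icc (0:ℝ) t₀ | γ ≤ ‖x s‖} with hS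
    have hmem₀ : ∀ s ∈ Icc (0:ℝ) t₀, s ∈ Ico0 T := fun s hs =>
      ⟨hs.1, lt_of_le_of_lt (ENNReal.ofReal_le_ofReal hs.2) ht₀.2⟩
    have hSne : S.Nonempty := ⟨t₀, ⟨⟨ht₀.1, le_rfl⟩, hγt₀.le⟩⟩
    have hSbdd : BddBelow S := ⟨0, fun s hs => hs.1.1⟩
    set t₁ := sInf S with ht₁
    have ht₁0 : 0 ≤ t₁ := le_csInf hSne fun s hs => hs.1.1
    have ht₁t₀ : t₁ ≤ t₀ := csInf_le hSbdd ⟨⟨ht₀.1, le_rfl⟩, hγt₀.le⟩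
    have ht₁mem : t₁ ∈ Ico0 T := hmem₀ t₁ ⟨ht₁0, ht₁t₀⟩
    have hcontn : ContinuousAt (fun s => ‖x s‖) t₁ := (hsol t₁ ht₁mem).continuousAt.norm
    have ht₁S : γ ≤ ‖x t₁‖ := by
      have hcl : t₁ ∈ closure S := csInf_mem_closure hSne hSbdd
      haveI hne : (𝓝[S] t₁).NeBot := mem_closure_iff_nhdsWithin_neBot.mp hcl
      have htd : Tendsto (fun s => ‖x s‖) (𝓝[S] t₁) (𝓝 ‖x t₁‖) :=
        hcontn.continuousWithinAt.tendsto
      exact ge_of_tendsto htd (eventually_nhdsWithin_of_forall fun s hs => hs.2)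
    have hlt : ∀ s ∈ Ico (0:ℝ) t₁, ‖x s‖ < γ := by
      intro s hs
      by_contra h
      push_neg at h
      have : t₁ ≤ s := csInf_le hSbdd ⟨⟨hs.1, hs.2.le.trans ht₁t₀⟩, h⟩
      exact absurd hs.2 (not_lt.mpr this)
    rcases eq_or_lt_of_le ht₁0 with h0 | h0
    · -- t₁ = 0 : contradiction with initial condition
      rw [← h0] at ht₁S
      have : (k₁ / k₂) * γ ≤ γ := by
        rw [div_mul_eq_mul_div, div_le_iff₀ hk₂]
        nlinarith
      linarith
    · -- t₁ > 0 : first, ‖x t₁‖ ≤ γ by continuity from the left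
      have hle : ‖x t₁‖ ≤ γ := by
        have htend : Tendsto (fun s => ‖x s‖) (𝓝[<] t₁) (𝓝 ‖x t₁‖) :=
          hcontn.continuousWithinAt.tendsto
        refine le_of_tendsto htend ?_
        filter_upwards [Ioo_mem_nhdsLT_of_mem (show t₁ ∈ Ioc (0:ℝ) t₁ from ⟨h0, le_rfl⟩)]
          with s hs
        exact (hlt s ⟨hs.1.le, hs.2⟩).le
      have hP : ∀ s ∈ Icc (0:ℝ) t₁, ‖x s‖ ≤ γ := by
        intro s hs
        rcases eq_or_lt_of_le hs.2 with h | h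
        · rw [h]; exact hle
        · exact (hlt s ⟨hs.1, h⟩).le
      have hb := key t₁ ht₁0 ht₁mem.2 hP
      have hexp1 : Real.exp (-k₃ * t₁) ≤ 1 := by
        rw [Real.exp_le_one_iff]
        nlinarith
      have hx0' : (k₂ / k₁) * ‖x 0‖ < γ := by
        have : (k₂ / k₁) * ‖x 0‖ < (k₂ / k₁) * ((k₁ / k₂) * γ) := by
          apply mul_lt_mul_of_pos_left hx0 (by positivity)
        calc (k₂ / k₁) * ‖x 0‖ < (k₂ / k₁) * ((k₁ / k₂) * γ) := this
          _ = γ := by field_simp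
      have : ‖x t₁‖ < γ := by
        calc ‖x t₁‖ ≤ (k₂ / k₁) * ‖x 0‖ * Real.exp (-k₃ * t₁) := hb
          _ ≤ (k₂ / k₁) * ‖x 0‖ := by nlinarith [norm_nonneg (x 0), (by positivity : (0:ℝ) < k₂ / k₁), mul_nonneg (le_of_lt (by positivity : (0:ℝ) < k₂/k₁)) (norm_nonneg (x 0))]
          _ < γ := hx0'
      linarith
  -- conclude
  exact key t ht.1 ht.2 fun s hs =>
    inv s ⟨hs.1, lt_of_le_of_lt (ENNReal.ofReal_le_ofReal hs.2) ht.2⟩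
end
end

section
/- For the inverted pendulum with PD control, i.e., the ODE θ' = ω, ω' = aθ - bω - (k₁θ + k₂ω), with parameters a > 0, b ≥ 0, k₁ > a, k₂ > -b, the function v(θ,ω) = (k₁ - a)θ²/2 + (((b + k₂)θ + ω)² + ω²)/4 satisfies v(0,0) = 0, v(θ,ω) > 0 for (θ,ω) ≠ (0,0), and its Lie derivative along the ODE is strictly negative for (θ,ω) ≠ (0,0). -/
open Real

noncomputable section

/-- Lyapunov function for the inverted pendulum with PD control. -/
def vInv (a b k₁ k₂ θ ω : ℝ) : ℝ :=
  (k₁ - a) * θ^2 / 2 + (((b + k₂) * θ + ω)^2 + ω^2) / 4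

lemma vInv_deriv_theta (a b k₁ k₂ θ ω : ℝ) :
    deriv (fun θ' => vInv a b k₁ k₂ θ' ω) θ =
      (k₁ - a) * θ + (b + k₂) * ((b + k₂) * θ + ω) / 2 := by
  have h : HasDerivAt (fun θ' => vInv a b k₁ k₂ θ' ω)
      ((k₁ - a) * θ + (b + k₂) * ((b + k₂) * θ + ω) / 2) θ := by
    unfold vInv
    have h1 : HasDerivAt (fun θ' : ℝ => θ') 1 θ := hasDerivAt_id θ
    convert (((h1.fun_pow 2).const_mul (k₁ - a)).div_const 2).fun_add
      (((((h1.const_mul (b + k₂)).add_const ω).fun_pow 2).add_const (ω^2)).div_const 4) using 1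
    case e'_9 => ring
    all_goals rfl
  exact h.deriv

lemma vInv_deriv_omega (a b k₁ k₂ θ ω : ℝ) :
    deriv (fun ω' => vInv a b k₁ k₂ θ ω') ω =
      ((b + k₂) * θ + 2 * ω) / 2 := by
  have h : HasDerivAt (fun ω' => vInv a b k₁ k₂ θ ω')
      (((b + k₂) * θ + 2 * ω) / 2) ω := by
    unfold vInv
    have h1 : HasDerivAt (fun ω' : ℝ => ω') 1 ω := hasDerivAt_id ω
    convert (hasDerivAt_const ω ((k₁ - a) * θ^2 / 2)).fun_add
      ((((h1.const_add ((b + k₂) * θ)).fun_pow 2).fun_add (h1.fun_pow 2)).div_const 4) using 1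
    case e'_9 => ring
    all_goals rfl
  exact h.deriv

theorem stmt_10 (a b k₁ k₂ : ℝ) (ha : 0 < a) (hb : 0 ≤ b) (hk₁ : a < k₁) (hk₂ : -b < k₂) :
    vInv a b k₁ k₂ 0 0 = 0 ∧
    (∀ θ ω : ℝ, (θ, ω) ≠ (0, 0) → 0 < vInv a b k₁ k₂ θ ω) ∧
    (∀ θ ω : ℝ, (θ, ω) ≠ (0, 0) →
      deriv (fun θ' => vInv a b k₁ k₂ θ' ω) θ * ω +
      deriv (fun ω' => vInv a b k₁ k₂ θ ω') ω * (a * θ - b * ω - (k₁ * θ + k₂ * ω)) < 0) := by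
  have hc : 0 < b + k₂ := by linarith
  have hm : 0 < k₁ - a := by linarith
  refine ⟨by simp [vInv], ?_, ?_⟩
  · intro θ ω hne
    have h : θ ≠ 0 ∨ ω ≠ 0 := by
      by_contra h; push_neg at h; exact hne (by simp [h.1, h.2])
    unfold vInv
    rcases h with h | h
    · have : 0 < θ^2 := by positivity
      nlinarith [sq_nonneg ((b + k₂) * θ + ω), sq_nonneg ω]
    · have : 0 < ω^2 := by positivity
      nlinarith [sq_nonneg ((b + k₂) * θ + ω)]
  · intro θ ω hne
    have h : θ ≠ 0 ∨ ω ≠ 0 := by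
      by_contra h; push_neg at h; exact hne (by simp [h.1, h.2])
    rw [vInv_deriv_theta, vInv_deriv_omega]
    have key : ((k₁ - a) * θ + (b + k₂) * ((b + k₂) * θ + ω) / 2) * ω +
        ((b + k₂) * θ + 2 * ω) / 2 * (a * θ - b * ω - (k₁ * θ + k₂ * ω)) =
        -((b + k₂) / 2) * ((k₁ - a) * θ^2 + ω^2) := by ring
    rw [key]
    have hpos : 0 < (b + k₂) / 2 * ((k₁ - a) * θ^2 + ω^2) := by
      rcases h with h | h
      · exact mul_pos (by linarith) (by nlinarith [sq_nonneg ω, pow_pos (abs_pos.mpr h) 2, sq_abs θ])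
      · exact mul_pos (by linarith) (by nlinarith [sq_nonneg θ, pow_pos (abs_pos.mpr h) 2, sq_abs ω])
    linarith
end
end

section
/- Sublevel-set trapping: let V : ℝ^n → ℝ be continuously differentiable and x(t) a solution of x' = f(x) on [0,T) with ⟨∇V(x(t)), f(x(t))⟩ ≤ 0 whenever ‖x(t)‖ ≤ γ. If V(x(0)) < k, ‖x(0)‖ < γ, and V(x) ≥ k for all x with ‖x‖ = γ, then ‖x(t)‖ < γ for all t ∈ [0,T). -/
open Set Filter Topology Metric
open scoped ENNReal RealInnerProductSpace

noncomputable section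

theorem stmt_17 {n : ℕ} (f : EuclideanSpace ℝ (Fin n) → EuclideanSpace ℝ (Fin n))
    (V : EuclideanSpace ℝ (Fin n) → ℝ) (γ k : ℝ)
    (hf : Continuous f) (hV : ContDiff ℝ 1 V) (hγ : 0 < γ)
    (x : ℝ → EuclideanSpace ℝ (Fin n)) (T : ℝ≥0∞) (hsol : IsSolOn f x T)
    (hdec : ∀ t ∈ Ico0 T, ‖x t‖ ≤ γ → ⟪gradient V (x t), f (x t)⟫ ≤ 0)
    (hV0 : V (x 0) < k) (hx0 : ‖x 0‖ < γ)
    (hsep : ∀ y : EuclideanSpace ℝ (Fin n), ‖y‖ = γ → k ≤ V y) :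
    ∀ t ∈ Ico0 T, ‖x t‖ < γ := by
  -- derivative of V ∘ x
  have hder : ∀ s ∈ Ico0 T,
      HasDerivAt (fun t => V (x t)) ⟪gradient V (x s), f (x s)⟫ s := by
    intro s hs
    have hgrad : HasGradientAt V (gradient V (x s)) (x s) :=
      ((hV.differentiable one_ne_zero) (x s)).hasGradientAt
    have := hgrad.hasFDerivAt.comp_hasDerivAt s (hsol s hs)
    simp only [InnerProductSpace.toDual_apply_apply] at this
    exact this
  by_contra hcon
  push_neg at hcon
  obtain ⟨t₁, ht₁T, ht₁⟩ := hcon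
  have ht₁0 : 0 ≤ t₁ := ht₁T.1
  -- membership in Ico0 for s ∈ [0, t₁]
  have hmem : ∀ s ∈ Icc (0:ℝ) t₁, s ∈ Ico0 T := by
    intro s hs
    exact ⟨hs.1, lt_of_le_of_lt (ENNReal.ofReal_le_ofReal hs.2) ht₁T.2⟩
  have hxcont : ContinuousOn x (Icc 0 t₁) := fun s hs =>
    ((hsol s (hmem s hs)).continuousAt).continuousWithinAt
  -- the hitting set
  set S : Set ℝ := Icc 0 t₁ ∩ (fun s => ‖x s‖) ⁻¹' Ici γ with hS
  have hSclosed : IsClosed S :=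
    (hxcont.norm).preimage_isClosed_of_isClosed isClosed_Icc isClosed_Ici
  have hSne : S.Nonempty := ⟨t₁, ⟨⟨ht₁0, le_rfl⟩, ht₁⟩⟩
  have hSbdd : BddBelow S := ⟨0, fun s hs => hs.1.1⟩
  set τ := sInf S with hτ
  have hτS : τ ∈ S := hSclosed.csInf_mem hSne hSbdd
  have hτIcc : τ ∈ Icc (0:ℝ) t₁ := hτS.1
  have hτγ : γ ≤ ‖x τ‖ := hτS.2
  have hlt : ∀ s, 0 ≤ s → s < τ → ‖x s‖ < γ := by
    intro s hs0 hsτ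
    by_contra h
    push_neg at h
    exact absurd (csInf_le hSbdd ⟨⟨hs0, hsτ.le.trans hτIcc.2⟩, h⟩) (not_le.2 hsτ)
  have hτpos : 0 < τ := by
    rcases lt_or_eq_of_le hτIcc.1 with h | h
    · exact h
    · exact absurd hτγ (not_le.2 (h ▸ hx0))
  -- ‖x τ‖ = γ by continuity from the left
  have hxτ : ‖x τ‖ = γ := by
    refine le_antisymm ?_ hτγ
    have hc : ContinuousWithinAt (fun s => ‖x s‖) (Iio τ) τ :=
      ((hsol τ (hmem τ hτIcc)).continuousAt).norm.continuousWithinAt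
    have hne : (𝓝[<] τ).NeBot := ⟨by
      simpa using (nhdsWithin_Iio_self_neBot' ⟨0, hτpos⟩).ne⟩
    refine le_of_tendsto hc ?_
    filter_upwards [self_mem_nhdsWithin, Ioo_mem_nhdsLT hτpos] with s hs1 hs2
    exact (hlt s hs2.1.le hs1).le
  -- norms ≤ γ on [0, τ]
  have hle : ∀ s ∈ Icc (0:ℝ) τ, ‖x s‖ ≤ γ := by
    intro s hs
    rcases lt_or_eq_of_le hs.2 with h | h
    · exact (hlt s hs.1 h).le
    · exact h ▸ hxτ.le
  -- V ∘ x is antitone on [0, τ]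
  have hmem' : ∀ s ∈ Icc (0:ℝ) τ, s ∈ Ico0 T := fun s hs =>
    hmem s ⟨hs.1, hs.2.trans hτIcc.2⟩
  have hanti : AntitoneOn (fun t => V (x t)) (Icc 0 τ) := by
    apply antitoneOn_of_deriv_nonpos (convex_Icc 0 τ)
    · exact fun s hs => ((hder s (hmem' s hs)).continuousAt).continuousWithinAt
    · intro s hs
      rw [interior_Icc] at hs
      exact ((hder s (hmem' s (Ioo_subset_Icc_self hs))).differentiableAt).differentiableWithinAt
    · intro s hs
      rw [interior_Icc] at hs
      rw [(hder s (hmem' s (Ioo_subset_Icc_self hs))).deriv]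
      exact hdec s (hmem' s (Ioo_subset_Icc_self hs)) (hle s (Ioo_subset_Icc_self hs))
  have : V (x τ) ≤ V (x 0) :=
    hanti ⟨le_rfl, hτpos.le⟩ ⟨hτpos.le, le_rfl⟩ hτpos.le
  exact absurd ((hsep (x τ) hxτ).trans this) (not_le.2 hV0)
end
end

section
/- Escape from compact staging sets: let x(t) be a right-maximal solution of x' = f(x) on [0,T), S ⊆ ℝ^n compact, and p : ℝ^n → ℝ continuously differentiable with ⟨∇p(x), f(x)⟩ > 0 for all x ∈ S. Suppose that for all t ∈ [0,T), if x(s) ∉ G for all s ∈ [0,t] then x(t) ∈ S, where G ⊆ ℝ^n. Then there exists t ∈ [0,T) with x(t) ∈ G. -/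
open Set Filter Topology Metric
open scoped ENNReal RealInnerProductSpace

noncomputable section
open scoped NNReal

/-- Locally Lipschitz implies Lipschitz on compact sets. -/
theorem my_lipschitzOnWith_of_isCompact {E F : Type*} [MetricSpace E] [MetricSpace F]
    {f : E → F} {K : Set E} (hf : LocallyLipschitz f) (hK : IsCompact K) :
    ∃ L : ℝ≥0, LipschitzOnWith L f K := by
  rcases K.eq_empty_or_nonempty with rfl | hne
  · exact ⟨1, by simp⟩
  have hcont : Continuous f := hf.continuous
  choose Kc tc htc hlipc using hf
  have hball : ∀ a : E, ∃ r : ℝ, 0 < r ∧ ball a (2 * r) ⊆ tc a := by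
    intro a
    rcases Metric.mem_nhds_iff.mp (htc a) with ⟨δ, hδ, hsub⟩
    exact ⟨δ / 2, by linarith, by rw [(by ring : 2 * (δ / 2) = δ)]; exact hsub⟩
  choose r hr hrsub using hball
  obtain ⟨s, hsK, hscov⟩ := hK.elim_nhds_subcover (fun a => ball a (r a))
    (fun a _ => ball_mem_nhds a (hr a))
  have hsne : s.Nonempty := by
    rcases hne with ⟨x, hx⟩
    rcases mem_iUnion₂.mp (hscov hx) with ⟨a, ha, _⟩
    exact ⟨a, ha⟩
  set δ : ℝ := s.inf' hsne r with hδdef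
  have hδpos : 0 < δ := by
    rw [hδdef, Finset.lt_inf'_iff]
    exact fun a _ => hr a
  obtain ⟨M, hM⟩ := Metric.isBounded_iff.mp (hK.image hcont).isBounded
  have hM0 : 0 ≤ M := by
    rcases hne with ⟨x, hx⟩
    exact le_trans dist_nonneg (hM (mem_image_of_mem f hx) (mem_image_of_mem f hx))
  have hMδ : 0 ≤ M / δ := div_nonneg hM0 hδpos.le
  set L₀ : ℝ≥0 := s.sup Kc with hL₀def
  refine ⟨L₀ + ⟨M / δ, hMδ⟩, LipschitzOnWith.of_dist_le_mul ?_⟩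
  intro x hx y hy
  rcases le_or_gt δ (dist x y) with hd | hd
  · calc dist (f x) (f y) ≤ M := hM (mem_image_of_mem f hx) (mem_image_of_mem f hy)
      _ = M / δ * δ := by field_simp
      _ ≤ M / δ * dist x y := mul_le_mul_of_nonneg_left hd hMδ
      _ ≤ (L₀ + ⟨M / δ, hMδ⟩ : ℝ≥0) * dist x y := by
          apply mul_le_mul_of_nonneg_right _ dist_nonneg
          push_cast
          have : (0:ℝ) ≤ L₀ := L₀.2
          change _ ≤ (L₀ : ℝ) + M / δ
          linarith
  · rcases mem_iUnion₂.mp (hscov hx) with ⟨a, has, hxa⟩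
    have hya : y ∈ ball a (2 * r a) := by
      rw [mem_ball] at hxa ⊢
      have hra : δ ≤ r a := Finset.inf'_le r has
      calc dist y a ≤ dist y x + dist x a := dist_triangle _ _ _
        _ < δ + r a := by rw [dist_comm y x]; exact add_lt_add_of_lt_of_lt hd hxa
        _ ≤ 2 * r a := by linarith
    have hxa' : x ∈ ball a (2 * r a) := by
      rw [mem_ball] at hxa ⊢
      have : 0 < r a := hr a
      linarith [hxa]
    have hdle := (lipschitzOnWith_iff_dist_le_mul.mp ((hlipc a).mono (hrsub a))) _ hxa' _ hya
    calc dist (f x) (f y) ≤ (Kc a : ℝ) * dist x y := hdle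
      _ ≤ (L₀ + ⟨M / δ, hMδ⟩ : ℝ≥0) * dist x y := by
          apply mul_le_mul_of_nonneg_right _ dist_nonneg
          push_cast
          have h2 : (Kc a : ℝ) ≤ L₀ := by exact_mod_cast Finset.le_sup has
          change _ ≤ (L₀ : ℝ) + M / δ
          linarith

/-- The hypotheses of the Picard–Lindelöf theorem, in the older form. -/
structure MyIsPicardLindelof {E : Type*} [NormedAddCommGroup E] (v : ℝ → E → E)
    (tMin t₀ tMax : ℝ) (x₀ : E) (L : ℝ≥0) (R C : ℝ) : Prop where
  ht₀ : t₀ ∈ Icc tMin tMax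
  hR : 0 ≤ R
  lipschitz : ∀ t ∈ Icc tMin tMax, LipschitzOnWith L (v t) (closedBall x₀ R)
  cont : ∀ x ∈ closedBall x₀ R, ContinuousOn (fun t : ℝ => v t x) (Icc tMin tMax)
  norm_le : ∀ t ∈ Icc tMin tMax, ∀ x ∈ closedBall x₀ R, ‖v t x‖ ≤ C
  C_mul_le_R : (C : ℝ) * max (tMax - t₀) (t₀ - tMin) ≤ R

/-- Picard–Lindelöf with the extra conclusion that the solution stays in the closed ball. -/
theorem my_pl_exists_mem {E : Type*} [NormedAddCommGroup E] [NormedSpace ℝ E] [CompleteSpace E]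
    {v : ℝ → E → E} {tMin t₀ tMax : ℝ} (x₀ : E) {C R : ℝ} {L : ℝ≥0}
    (hpl : MyIsPicardLindelof v tMin t₀ tMax x₀ L R C) :
    ∃ f : ℝ → E, f t₀ = x₀ ∧ ∀ t ∈ Icc tMin tMax,
      HasDerivWithinAt f (v t (f t)) (Icc tMin tMax) t ∧ f t ∈ closedBall x₀ R := by
  lift C to ℝ≥0 using (norm_nonneg _).trans (hpl.norm_le t₀ hpl.ht₀ x₀ (mem_closedBall_self hpl.hR))
  lift R to ℝ≥0 using hpl.hR
  set t₀' : Icc tMin tMax := ⟨t₀, hpl.ht₀⟩ with ht₀'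
  have hf : IsPicardLindelof v t₀' x₀ R 0 C L :=
    { lipschitzOnWith := hpl.lipschitz
      continuousOn := hpl.cont
      norm_le := hpl.norm_le
      mul_max_le := by simpa using hpl.C_mul_le_R }
  obtain ⟨α, hα⟩ := ODE.FunSpace.exists_isFixedPt_next hf (mem_closedBall_self le_rfl)
  refine ⟨α.compProj, ?_, fun t ht => ⟨?_, α.compProj_mem_closedBall hf.mul_max_le⟩⟩
  · show α.compProj (t₀' : ℝ) = x₀
    rw [ODE.FunSpace.compProj_val, ← hα, ODE.FunSpace.next_apply₀]
  · apply ODE.hasDerivWithinAt_picard_Icc t₀'.2 hf.continuousOn_uncurry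
      α.continuous_compProj.continuousOn (fun _ ht' ↦ α.compProj_mem_closedBall hf.mul_max_le)
      x₀ ht |>.congr_of_mem _ ht
    intro t' ht'
    nth_rw 1 [← hα]
    rw [ODE.FunSpace.compProj_of_mem ht', ODE.FunSpace.next_apply]

theorem my_grad_inner {n : ℕ} (p : EuclideanSpace ℝ (Fin n) → ℝ) (y v : EuclideanSpace ℝ (Fin n)) :
    ⟪gradient p y, v⟫ = fderiv ℝ p y v := by
  rw [gradient]
  exact InnerProductSpace.toDual_symm_apply


theorem stmt_18 {n : ℕ} (f : EuclideanSpace ℝ (Fin n) → EuclideanSpace ℝ (Fin n))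
    (p : EuclideanSpace ℝ (Fin n) → ℝ)
    (S G : Set (EuclideanSpace ℝ (Fin n)))
    (hf : LocallyLipschitz f) (hS : IsCompact S) (hp : ContDiff ℝ 1 p)
    (hprog : ∀ y ∈ S, 0 < ⟪gradient p y, f y⟫)
    (x : ℝ → EuclideanSpace ℝ (Fin n)) (T : ℝ≥0∞) (hsol : IsMaxSol f x T)
    (hstage : ∀ t ∈ Ico0 T, (∀ s, 0 ≤ s → s ≤ t → x s ∉ G) → x t ∈ S) :
    ∃ t ∈ Ico0 T, x t ∈ G := by
  by_contra hG
  push_neg at hG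
  have hxS : ∀ t ∈ Ico0 T, x t ∈ S := fun t ht => hstage t ht
    (fun s hs0 hst => hG s ⟨hs0, lt_of_le_of_lt (ENNReal.ofReal_le_ofReal hst) ht.2⟩)
  rcases eq_or_ne T ⊤ with hT | hT
  · -- T = ⊤ : the solution stays in S forever, but p grows without bound along it
    subst hT
    have htmem : ∀ t : ℝ, 0 ≤ t → t ∈ Ico0 ⊤ := fun t h => ⟨h, ENNReal.ofReal_lt_top⟩
    have hx0S : x 0 ∈ S := hxS 0 (htmem 0 le_rfl)
    have hgc : Continuous (fun y => ⟪gradient p y, f y⟫) := by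
      have h1 : Continuous (fun y => fderiv ℝ p y (f y)) :=
        (hp.continuous_fderiv one_ne_zero).clm_apply hf.continuous
      simpa only [my_grad_inner] using h1
    obtain ⟨y₀, hy₀S, hmin⟩ := hS.exists_isMinOn ⟨x 0, hx0S⟩ hgc.continuousOn
    set c : ℝ := ⟪gradient p y₀, f y₀⟫ with hc_def
    have hc : 0 < c := hprog y₀ hy₀S
    obtain ⟨z₀, hz₀S, hmax⟩ := hS.exists_isMaxOn ⟨x 0, hx0S⟩ hp.continuous.continuousOn
    have hφ' : ∀ t : ℝ, 0 ≤ t → HasDerivAt (fun s => p (x s)) ⟪gradient p (x t), f (x t)⟫ t := by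
      intro t ht
      have hd := (hp.differentiable one_ne_zero (x t)).hasFDerivAt
      have h2 := hd.comp_hasDerivAt t (hsol.1 t ⟨ht, ENNReal.ofReal_lt_top⟩)
      rw [my_grad_inner]
      exact h2
    -- ψ t = p (x t) - c * t is monotone on [0, ∞)
    set ψ : ℝ → ℝ := fun t => p (x t) - c * t with hψ_def
    have hψ' : ∀ t : ℝ, 0 ≤ t → HasDerivAt ψ (⟪gradient p (x t), f (x t)⟫ - c) t := by
      intro t ht
      exact (hφ' t ht).sub ((hasDerivAt_id t).const_mul c |>.congr_deriv (mul_one c))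
    have hmono : MonotoneOn ψ (Ici 0) := by
      apply monotoneOn_of_deriv_nonneg (convex_Ici 0)
      · exact fun t ht => (hψ' t ht).continuousAt.continuousWithinAt
      · intro t ht
        rw [interior_Ici] at ht
        exact (hψ' t (le_of_lt ht)).differentiableAt.differentiableWithinAt
      · intro t ht
        rw [interior_Ici] at ht
        rw [(hψ' t (le_of_lt ht)).deriv]
        have := hmin (hxS t (htmem t (le_of_lt ht)))
        simpa [hc_def] using this
    -- contradiction: p (x t) ≤ p z₀ for all t ≥ 0, but p (x t) grows linearly
    set t₁ : ℝ := (p z₀ - p (x 0)) / c + 1 with ht₁_def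
    have hpz₀ : p (x 0) ≤ p z₀ := hmax hx0S
    have ht₁pos : 0 ≤ t₁ := by
      have : 0 ≤ (p z₀ - p (x 0)) / c := div_nonneg (by linarith) hc.le
      rw [ht₁_def]; linarith
    have h1 : ψ 0 ≤ ψ t₁ := hmono (self_mem_Ici) ht₁pos ht₁pos
    have h2 : p (x t₁) ≤ p z₀ := hmax (hxS t₁ (htmem t₁ ht₁pos))
    have h3 : c * t₁ = (p z₀ - p (x 0)) + c := by
      rw [ht₁_def, mul_add, mul_div_cancel₀ _ hc.ne', mul_one]
    simp only [hψ_def, mul_zero, sub_zero] at h1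
    rw [h3] at h1
    linarith
  · -- T < ⊤
    rcases eq_or_ne T 0 with hT0 | hT0
    · -- T = 0 : Ico0 T is empty, but the ODE has a local solution, contradicting maximality
      subst hT0
      obtain ⟨Lc, t0set, ht0set, hlip⟩ := hf 0
      obtain ⟨ρ, hρ, hsub⟩ := Metric.mem_nhds_iff.mp ht0set
      obtain ⟨C, hC⟩ := (isCompact_closedBall (0 : EuclideanSpace ℝ (Fin n)) (ρ/2)).exists_bound_of_continuousOn
        hf.continuous.continuousOn
      have hC0 : 0 ≤ C := le_trans (norm_nonneg _) (hC 0 (mem_closedBall_self (by linarith)))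
      set ε : ℝ := (ρ/2)/(C+1) with hε_def
      have hεpos : 0 < ε := by positivity
      have hpl : MyIsPicardLindelof (fun _ => f) (0-ε) 0 (0+ε) 0 Lc (ρ/2) C :=
        { ht₀ := by constructor <;> linarith
          hR := by linarith
          lipschitz := fun _ _ => hlip.mono
            ((closedBall_subset_ball (by linarith)).trans hsub)
          cont := fun _ _ => continuousOn_const
          norm_le := fun _ _ y hy => hC y hy
          C_mul_le_R := by
            have h1 : max (0+ε-0) (0-(0-ε)) = ε := by
              simp
            rw [h1, hε_def]
            rw [div_eq_iff (by positivity : (C:ℝ)+1 ≠ 0)] at *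
            nlinarith [mul_le_mul_of_nonneg_left (le_refl (ρ/2)) hC0] }
      obtain ⟨z, hz0, hz⟩ := my_pl_exists_mem 0 hpl
      refine hsol.2 z (ENNReal.ofReal ε) (by simpa using ENNReal.ofReal_pos.2 hεpos) ?_ ?_
      · intro t ht
        have ht2 : t < ε := by
          have := ht.2
          rwa [ENNReal.ofReal_lt_ofReal_iff hεpos] at this
        have htIoo : t ∈ Ioo (0-ε) (0+ε) := ⟨by linarith [ht.1], by linarith⟩
        exact ((hz t (Ioo_subset_Icc_self htIoo)).1).hasDerivAt (Icc_mem_nhds htIoo.1 htIoo.2)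
      · intro t ht
        exact absurd ht.2 (by simp)
    · -- 0 < T < ⊤ : extend the solution beyond T, contradicting maximality
      set Tr : ℝ := T.toReal with hTr_def
      have hTrpos : 0 < Tr := ENNReal.toReal_pos hT0 hT
      have hIco : ∀ {t : ℝ}, 0 ≤ t → t < Tr → t ∈ Ico0 T :=
        fun {t} h1 h2 => ⟨h1, (ENNReal.ofReal_lt_iff_lt_toReal h1 hT).2 h2⟩
      have hIco' : ∀ {t : ℝ}, t ∈ Ico0 T → t < Tr :=
        fun {t} ht => (ENNReal.ofReal_lt_iff_lt_toReal ht.1 hT).1 ht.2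
      have hTofReal : ENNReal.ofReal Tr = T := by rw [hTr_def]; exact ENNReal.ofReal_toReal hT
      clear_value Tr
      set K₂ : Set (EuclideanSpace ℝ (Fin n)) := cthickening 1 S with hK₂_def
      have hK₂c : IsCompact K₂ := hS.cthickening
      have hSK₂ : S ⊆ K₂ := self_subset_cthickening S
      obtain ⟨L, hL⟩ := my_lipschitzOnWith_of_isCompact hf hK₂c
      obtain ⟨M₀, hM₀⟩ := hK₂c.exists_bound_of_continuousOn hf.continuous.continuousOn
      set M : ℝ := max M₀ 0 with hM_def
      have hM0 : 0 ≤ M := le_max_right _ _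
      have hMb : ∀ y ∈ K₂, ‖f y‖ ≤ M := fun y hy => le_trans (hM₀ y hy) (le_max_left _ _)
      clear_value M
      set ε : ℝ := 1/(M+1) with hε_def
      have hεpos : 0 < ε := by rw [hε_def]; positivity
      have hMε : M * ε ≤ 1 := by
        rw [hε_def, mul_one_div, div_le_one (by positivity)]
        linarith
      clear_value ε
      set t₀ : ℝ := Tr - min ε Tr / 2 with ht₀_def
      have ht₀pos : 0 < t₀ := by
        have h1 : min ε Tr ≤ Tr := min_le_right _ _
        rw [ht₀_def]; linarith
      have ht₀lt : t₀ < Tr := by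
        have h1 : 0 < min ε Tr := lt_min hεpos hTrpos
        rw [ht₀_def]; linarith
      have ht₀ε : Tr < t₀ + ε := by
        have h1 : min ε Tr ≤ ε := min_le_left _ _
        rw [ht₀_def]; linarith
      clear_value t₀
      have hx₀S : x t₀ ∈ S := hxS t₀ (hIco ht₀pos.le ht₀lt)
      have hpl : MyIsPicardLindelof (fun _ => f) (t₀-ε) t₀ (t₀+ε) (x t₀) L 1 M :=
        { ht₀ := by constructor <;> linarith
          hR := zero_le_one
          lipschitz := fun _ _ => hL.mono (closedBall_subset_cthickening hx₀S 1)
          cont := fun _ _ => continuousOn_const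
          norm_le := fun _ _ y hy => hMb y (closedBall_subset_cthickening hx₀S 1 hy)
          C_mul_le_R := by
            have h1 : max (t₀+ε-t₀) (t₀-(t₀-ε)) = ε := by simp
            rw [h1]; exact hMε }
      obtain ⟨z, hzt₀, hz⟩ := my_pl_exists_mem (x t₀) hpl
      have hzK₂ : ∀ t ∈ Icc (t₀-ε) (t₀+ε), z t ∈ K₂ :=
        fun t ht => closedBall_subset_cthickening hx₀S 1 ((hz t ht).2)
      have hzD : ∀ t ∈ Ioo (t₀-ε) (t₀+ε), HasDerivAt z (f (z t)) t :=
        fun t ht => ((hz t (Ioo_subset_Icc_self ht)).1).hasDerivAt (Icc_mem_nhds ht.1 ht.2)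
      set a : ℝ := max (t₀-ε) (t₀/2) with ha_def
      have ha_lt : a < t₀ := by
        rw [ha_def]; exact max_lt (by linarith) (by linarith)
      have ha_pos : 0 < a := by
        have : t₀/2 ≤ a := by rw [ha_def]; exact le_max_right _ _
        linarith
      have ha_ge : t₀ - ε ≤ a := by rw [ha_def]; exact le_max_left _ _
      clear_value a
      -- uniqueness: x = z on [a, Tr)
      have hxz : ∀ s : ℝ, a ≤ s → s < Tr → x s = z s := by
        intro s hs1 hs2
        set b : ℝ := max s ((t₀+Tr)/2) with hb_def
        have hb_s : s ≤ b := by rw [hb_def]; exact le_max_left _ _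
        have hb1 : b < Tr := by rw [hb_def]; exact max_lt hs2 (by linarith)
        have hb2 : t₀ < b := by
          have : (t₀+Tr)/2 ≤ b := by rw [hb_def]; exact le_max_right _ _
          linarith
        clear_value b
        have hb3 : b < t₀ + ε := hb1.trans ht₀ε
        have hmemIcc : ∀ t ∈ Icc a b, t ∈ Ico0 T := fun t ht =>
          hIco (le_trans ha_pos.le ht.1) (lt_of_le_of_lt ht.2 hb1)
        have key : EqOn x z (Icc a b) := by
          apply ODE_solution_unique_of_mem_Icc (v := fun _ => f) (s := fun _ => K₂)
            (fun _ _ => hL) ⟨ha_lt, hb2⟩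
          · exact fun t ht => (hsol.1 t (hmemIcc t ht)).continuousAt.continuousWithinAt
          · exact fun t ht => hsol.1 t (hmemIcc t (Ioo_subset_Icc_self ht))
          · exact fun t ht => hSK₂ (hxS t (hmemIcc t (Ioo_subset_Icc_self ht)))
          · exact fun t ht => ((hz t ⟨by linarith [ht.1], by linarith [ht.2]⟩).1).continuousWithinAt.mono
              (fun u hu => ⟨by linarith [hu.1], by linarith [hu.2]⟩)
          · exact fun t ht => hzD t ⟨by linarith [ht.1], by linarith [ht.2]⟩
          · exact fun t ht => hzK₂ t ⟨by linarith [ht.1], by linarith [ht.2]⟩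
          · exact hzt₀.symm
        exact key ⟨hs1, hb_s⟩
      -- the extended solution
      set y : ℝ → EuclideanSpace ℝ (Fin n) := fun t => if t < t₀ then x t else z t with hy_def
      have hτpos : (0:ℝ) < t₀ + ε := by linarith
      have hTT' : T < ENNReal.ofReal (t₀ + ε) := by
        rw [← hTofReal]
        exact (ENNReal.ofReal_lt_ofReal_iff hτpos).2 (by linarith)
      have hyx : ∀ t ∈ Ico0 T, y t = x t := by
        intro t ht
        have htTr : t < Tr := hIco' ht
        by_cases h : t < t₀
        · simp [hy_def, h]
        · have := hxz t (le_trans ha_lt.le (not_lt.mp h)) htTr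
          simp [hy_def, h, this]
      refine hsol.2 y (ENNReal.ofReal (t₀ + ε)) hTT' ?_ hyx
      intro t ht
      have ht2 : t < t₀ + ε := by
        have := ht.2
        rwa [ENNReal.ofReal_lt_ofReal_iff hτpos] at this
      rcases lt_trichotomy t t₀ with h | h | h
      · have hy_eq : y =ᶠ[𝓝 t] x :=
          eventually_of_mem (Iio_mem_nhds h) (fun s hs => if_pos hs)
        have hx' := hsol.1 t (hIco ht.1 (h.trans ht₀lt))
        have hyt : y t = x t := if_pos h
        rw [hyt]
        exact hx'.congr_of_eventuallyEq hy_eq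
      · subst h
        have hy_eq : y =ᶠ[𝓝 t] z := by
          apply eventually_of_mem (Ioo_mem_nhds ha_lt ht₀lt)
          intro s hs
          by_cases h' : s < t
          · have := hxz s hs.1.le hs.2
            simp [hy_def, h', this]
          · simp [hy_def, h']
        have hz' := hzD t ⟨by linarith, by linarith⟩
        have hyt : y t = z t := if_neg (lt_irrefl t)
        rw [hyt]
        exact hz'.congr_of_eventuallyEq hy_eq
      · have hy_eq : y =ᶠ[𝓝 t] z :=
          eventually_of_mem (Ioi_mem_nhds h) (fun s hs => if_neg (not_lt.mpr (le_of_lt hs)))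
        have hz' := hzD t ⟨by linarith, by linarith⟩
        have hyt : y t = z t := if_neg (not_lt.mpr h.le)
        rw [hyt]
        exact hz'.congr_of_eventuallyEq hy_eq
end
end
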